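/- (Commutation Lemma) If x is a strong reduct of u·v·w, then there exists a strong reduct y of v such that u·y·w strongly reduces to x. -/

import Mathlib

structure Letter (N : ℕ) where
  lo : ℕ
  hi : ℕ
  lo_le_hi : lo ≤ hi
  hi_le : hi ≤ N

namespace PS

/-- `t` is a (non-strict) subletter of `s`. -/
def Sub {N : ℕ} (t s : Letter N) : Prop := s.lo ≤ t.lo ∧ t.hi ≤ s.hi

/-- `t` is a proper subletter of `s`. -/
def PSub {N : ℕ} (t s : Letter N) : Prop := Sub t s ∧ t ≠ s

/-- Two letters commute iff they have distance at least 2. -/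
def Comm {N : ℕ} (s t : Letter N) : Prop := s.hi + 2 ≤ t.lo ∨ t.hi + 2 ≤ s.lo

abbrev Word (N : ℕ) := List (Letter N)

/-- Commutation step: swap two adjacent commuting letters. -/
def SwapStep {N : ℕ} (u v : Word N) : Prop :=
  ∃ (x y : Word N) (s t : Letter N),
    Comm s t ∧ u = x ++ s :: t :: y ∧ v = x ++ t :: s :: y

/-- Cancellation step: replace an occurrence `s·t` or `t·s` by `s`, when `t ⊆ s`. -/
def CancelStep {N : ℕ} (u v : Word N) : Prop :=
  ∃ (x y : Word N) (s t : Letter N),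
    Sub t s ∧ (u = x ++ s :: t :: y ∨ u = x ++ t :: s :: y) ∧ v = x ++ s :: y

/-- Splitting step: replace an occurrence `s·s` by a (possibly empty) product of
proper subletters of `s`. -/
def SplitStep {N : ℕ} (u v : Word N) : Prop :=
  ∃ (x y : Word N) (s : Letter N) (l : Word N),
    (∀ t ∈ l, PSub t s) ∧ u = x ++ s :: s :: y ∧ v = x ++ l ++ y

/-- Commutation-equivalence of words. -/
def WEquiv {N : ℕ} : Word N → Word N → Prop := Relation.ReflTransGen SwapStep

/-- Reduction: finitely many commutation and cancellation steps. -/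
def Red {N : ℕ} : Word N → Word N → Prop :=
  Relation.ReflTransGen (fun u v => SwapStep u v ∨ CancelStep u v)

/-- Strong reduction: also allowing splitting steps. -/
def SRed {N : ℕ} : Word N → Word N → Prop :=
  Relation.ReflTransGen (fun u v => SwapStep u v ∨ CancelStep u v ∨ SplitStep u v)

/-- The congruence defining the monoid Γ. -/
def GammaRel {N : ℕ} : Word N → Word N → Prop :=
  Relation.EqvGen (fun u v => SwapStep u v ∨ CancelStep u v)

/-- A word is reduced if there is no pair of occurrences `i ≠ j` with `sᵢ ⊆ sⱼ`
such that `sᵢ` commutes with every letter strictly between them. -/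
def Reduced {N : ℕ} (w : Word N) : Prop :=
  ¬ ∃ (x y z : Word N) (a b : Letter N),
      w = x ++ a :: (y ++ b :: z) ∧
      ((Sub a b ∧ ∀ r ∈ y, Comm a r) ∨ (Sub b a ∧ ∀ r ∈ y, Comm b r))

/-- The letter `s` is left-absorbed by the word `v`. -/
def LAbsLetter {N : ℕ} (s : Letter N) (v : Word N) : Prop :=
  ∃ (x : Word N) (t : Letter N) (y : Word N),
    v = x ++ t :: y ∧ Sub s t ∧ ∀ r ∈ x, Comm s r

/-- The letter `s` is properly left-absorbed by the word `v`. -/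
def PLAbsLetter {N : ℕ} (s : Letter N) (v : Word N) : Prop :=
  ∃ (x : Word N) (t : Letter N) (y : Word N),
    v = x ++ t :: y ∧ PSub s t ∧ ∀ r ∈ x, Comm s r

/-- The letter `s` is right-absorbed by the word `w`. -/
def RAbsLetter {N : ℕ} (s : Letter N) (w : Word N) : Prop :=
  ∃ (x : Word N) (t : Letter N) (y : Word N),
    w = x ++ t :: y ∧ Sub s t ∧ ∀ r ∈ y, Comm s r

/-- The letter `s` is properly right-absorbed by the word `w`. -/
def PRAbsLetter {N : ℕ} (s : Letter N) (w : Word N) : Prop :=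
  ∃ (x : Word N) (t : Letter N) (y : Word N),
    w = x ++ t :: y ∧ PSub s t ∧ ∀ r ∈ y, Comm s r

/-- The word `u` is left-absorbed by `v`. -/
def LAbsWord {N : ℕ} (u v : Word N) : Prop := ∀ s ∈ u, LAbsLetter s v

/-- `v` bites `u` from the right: `v` left-absorbs some letter of the final segment of `u`. -/
def BitesRight {N : ℕ} (v u : Word N) : Prop :=
  ∃ (x : Word N) (s : Letter N) (y : Word N),
    u = x ++ s :: y ∧ (∀ r ∈ y, Comm s r) ∧ LAbsLetter s v

end PS

namespace PSAux
open PS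

variable {N : ℕ}

/-! ### Letter lemmas -/

theorem Letter.ext' {s t : Letter N} (h1 : s.lo = t.lo) (h2 : s.hi = t.hi) : s = t := by
  cases s; cases t; simp_all

theorem sub_refl (s : Letter N) : Sub s s := ⟨le_refl _, le_refl _⟩

theorem sub_trans {a b c : Letter N} (h1 : Sub a b) (h2 : Sub b c) : Sub a c :=
  ⟨le_trans h2.1 h1.1, le_trans h1.2 h2.2⟩

theorem sub_antisymm {a b : Letter N} (h1 : Sub a b) (h2 : Sub b a) : a = b :=
  Letter.ext' (le_antisymm h2.1 h1.1) (le_antisymm h1.2 h2.2)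

theorem comm_symm {s t : Letter N} (h : Comm s t) : Comm t s := h.symm

theorem comm_mono {a d c : Letter N} (h1 : Sub a d) (h2 : Comm d c) : Comm a c := by
  rcases h1 with ⟨hl, hh⟩
  rcases h2 with h | h
  · exact Or.inl (by omega)
  · exact Or.inr (by omega)

theorem comm_irrefl (a : Letter N) : ¬ Comm a a := by
  have := a.lo_le_hi
  rintro (h | h) <;> omega

theorem not_sub_comm {t s : Letter N} (h1 : Sub t s) (h2 : Comm t s) : False := by
  have := t.lo_le_hi
  rcases h1 with ⟨hl, hh⟩
  rcases h2 with h | h <;> omega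

theorem psub_of_psub_of_sub {c t b : Letter N} (h1 : PSub c t) (h2 : Sub t b) : PSub c b := by
  refine ⟨sub_trans h1.1 h2, fun hcb => h1.2 ?_⟩
  subst hcb
  exact sub_antisymm h1.1 h2

theorem psub_of_sub_of_psub {c t b : Letter N} (h1 : Sub c t) (h2 : PSub t b) : PSub c b := by
  refine ⟨sub_trans h1 h2.1, fun hcb => h2.2 ?_⟩
  subst hcb
  exact sub_antisymm h2.1 h1

/-! ### lsize -/

def lsize (l : Letter N) : ℕ := l.hi - l.lo

theorem lsize_lt_of_psub {t s : Letter N} (h : PSub t s) : lsize t < lsize s := by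
  rcases h with ⟨⟨hl, hh⟩, hne⟩
  have h1 := t.lo_le_hi
  have h2 := s.lo_le_hi
  by_contra hcon
  exact hne (Letter.ext' (by unfold lsize at hcon; omega) (by unfold lsize at hcon; omega))

theorem lsize_le (l : Letter N) : lsize l ≤ N := by
  have := l.hi_le; unfold lsize; omega

/-! ### Unified step relation -/

def Rule (p₁ p₂ : Letter N) (R : Word N) : Prop :=
  (Comm p₁ p₂ ∧ R = [p₂, p₁]) ∨ (Sub p₂ p₁ ∧ R = [p₁]) ∨ (Sub p₁ p₂ ∧ R = [p₂]) ∨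
    (p₁ = p₂ ∧ ∀ t ∈ R, PSub t p₁)

def Step (u v : Word N) : Prop :=
  ∃ (X Y : Word N) (p₁ p₂ : Letter N) (R : Word N),
    Rule p₁ p₂ R ∧ u = X ++ p₁ :: p₂ :: Y ∧ v = X ++ R ++ Y

def SStep (u v : Word N) : Prop := SwapStep u v ∨ CancelStep u v ∨ SplitStep u v

theorem sstep_iff_step {u v : Word N} : SStep u v ↔ Step u v := by
  constructor
  · rintro (⟨X, Y, s, t, hc, hu, hv⟩ | ⟨X, Y, s, t, hsub, hu | hu, hv⟩ | ⟨X, Y, s, l, hl, hu, hv⟩)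
    · exact ⟨X, Y, s, t, [t, s], Or.inl ⟨hc, rfl⟩, hu, by simpa using hv⟩
    · exact ⟨X, Y, s, t, [s], Or.inr (Or.inl ⟨hsub, rfl⟩), hu, by simpa using hv⟩
    · exact ⟨X, Y, t, s, [s], Or.inr (Or.inr (Or.inl ⟨hsub, rfl⟩)), hu, by simpa using hv⟩
    · exact ⟨X, Y, s, s, l, Or.inr (Or.inr (Or.inr ⟨rfl, hl⟩)), hu, hv⟩
  · rintro ⟨X, Y, p₁, p₂, R, (⟨hc, rfl⟩ | ⟨hs, rfl⟩ | ⟨hs, rfl⟩ | ⟨rfl, hl⟩), hu, hv⟩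
    · exact Or.inl ⟨X, Y, p₁, p₂, hc, hu, by simpa using hv⟩
    · exact Or.inr (Or.inl ⟨X, Y, p₁, p₂, hs, Or.inl hu, by simpa using hv⟩)
    · exact Or.inr (Or.inl ⟨X, Y, p₂, p₁, hs, Or.inr hu, by simpa using hv⟩)
    · exact Or.inr (Or.inr ⟨X, Y, p₁, R, hl, hu, hv⟩)

theorem sred_iff {u v : Word N} : SRed u v ↔ Relation.ReflTransGen Step u v := by
  unfold SRed
  constructor
  · exact fun h => Relation.ReflTransGen.mono (fun a b hab => sstep_iff_step.1 hab) _ _ h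
  · exact fun h => Relation.ReflTransGen.mono (fun a b hab => sstep_iff_step.2 hab) _ _ h

theorem sred_refl (u : Word N) : SRed u u := Relation.ReflTransGen.refl

theorem sred_trans {u v w : Word N} (h1 : SRed u v) (h2 : SRed v w) : SRed u w :=
  Relation.ReflTransGen.trans h1 h2

theorem step_sred {u v : Word N} (h : Step u v) : SRed u v :=
  sred_iff.2 (Relation.ReflTransGen.single h)

theorem sred_head {u v w : Word N} (h1 : Step u v) (h2 : SRed v w) : SRed u w :=
  sred_trans (step_sred h1) h2

/-! ### Step constructors -/

theorem step_swap (X Y : Word N) {s t : Letter N} (h : Comm s t) :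
    Step (X ++ s :: t :: Y) (X ++ t :: s :: Y) :=
  ⟨X, Y, s, t, [t, s], Or.inl ⟨h, rfl⟩, rfl, by simp⟩

theorem step_cancel₁ (X Y : Word N) {s t : Letter N} (h : Sub t s) :
    Step (X ++ s :: t :: Y) (X ++ s :: Y) :=
  ⟨X, Y, s, t, [s], Or.inr (Or.inl ⟨h, rfl⟩), rfl, by simp⟩

theorem step_cancel₂ (X Y : Word N) {s t : Letter N} (h : Sub t s) :
    Step (X ++ t :: s :: Y) (X ++ s :: Y) :=
  ⟨X, Y, t, s, [s], Or.inr (Or.inr (Or.inl ⟨h, rfl⟩)), rfl, by simp⟩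

theorem step_split (X Y : Word N) {s : Letter N} {l : Word N} (h : ∀ c ∈ l, PSub c s) :
    Step (X ++ s :: s :: Y) (X ++ l ++ Y) :=
  ⟨X, Y, s, s, l, Or.inr (Or.inr (Or.inr ⟨rfl, h⟩)), rfl, rfl⟩

/-! ### Context closure -/

theorem step_context {m m' : Word N} (X Y : Word N) (h : Step m m') :
    Step (X ++ m ++ Y) (X ++ m' ++ Y) := by
  rcases h with ⟨A, B, p₁, p₂, R, hr, hm, hm'⟩
  exact ⟨X ++ A, B ++ Y, p₁, p₂, R, hr, by simp [hm], by simp [hm']⟩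

theorem sred_context {m m' : Word N} (X Y : Word N) (h : SRed m m') :
    SRed (X ++ m ++ Y) (X ++ m' ++ Y) := by
  rw [sred_iff] at *
  induction h with
  | refl => exact Relation.ReflTransGen.refl
  | tail _ hstep ih => exact ih.tail (step_context X Y hstep)

/-! ### Moves and absorptions -/

theorem move_right {c : Letter N} : ∀ (Q X Y : Word N), (∀ r ∈ Q, Comm c r) →
    SRed (X ++ c :: Q ++ Y) (X ++ Q ++ c :: Y)
  | [], X, Y, _ => by simp [sred_refl]
  | q :: Q', X, Y, h => by
    have h1 : Step (X ++ c :: q :: (Q' ++ Y)) (X ++ q :: c :: (Q' ++ Y)) :=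
      step_swap X (Q' ++ Y) (h q (by simp))
    have h2 := move_right Q' (X ++ [q]) Y (fun r hr => h r (by simp [hr]))
    refine sred_head (v := X ++ q :: c :: (Q' ++ Y)) (by simpa using h1) (by simpa using h2)

theorem move_left {c : Letter N} : ∀ (Q X Y : Word N), (∀ r ∈ Q, Comm c r) →
    SRed (X ++ Q ++ c :: Y) (X ++ c :: Q ++ Y)
  | [], X, Y, _ => by simp [sred_refl]
  | q :: Q', X, Y, h => by
    have h2 := move_left Q' (X ++ [q]) Y (fun r hr => h r (by simp [hr]))
    have h1 : Step (X ++ q :: c :: (Q' ++ Y)) (X ++ c :: q :: (Q' ++ Y)) :=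
      step_swap X (Q' ++ Y) (comm_symm (h q (by simp)))
    refine sred_trans (v := X ++ q :: c :: (Q' ++ Y)) (by simpa using h2) (step_sred (by simpa using h1))

theorem absorb_left {a : Letter N} (h : ∀ c ∈ (H : Word N), Sub c a) (X Y : Word N) :
    SRed (X ++ H ++ a :: Y) (X ++ a :: Y) := by
  induction H using List.reverseRecOn with
  | nil => simp [sred_refl]
  | append_singleton H' d ih =>
    have hstep : Step (X ++ H' ++ d :: a :: Y) (X ++ H' ++ a :: Y) :=
      step_cancel₂ (X ++ H') Y (h d (by simp))
    refine sred_trans (v := X ++ H' ++ d :: a :: Y) (by simp [sred_refl]) ?_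
    exact sred_head hstep (ih (fun c hc => h c (by simp [hc])))

theorem absorb_right {a : Letter N} : ∀ {H : Word N}, (∀ c ∈ H, Sub c a) → ∀ (X Y : Word N),
    SRed (X ++ a :: H ++ Y) (X ++ a :: Y)
  | [], _, X, Y => by simp [sred_refl]
  | d :: H', h, X, Y => by
    have hstep : Step (X ++ a :: d :: (H' ++ Y)) (X ++ a :: (H' ++ Y)) :=
      step_cancel₁ X (H' ++ Y) (h d (by simp))
    refine sred_head (v := X ++ a :: (H' ++ Y)) (by simpa using hstep) ?_
    simpa using absorb_right (fun c hc => h c (by simp [hc])) X Y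

theorem annihilate : ∀ (H X Y : Word N), SRed (X ++ H ++ H.reverse ++ Y) (X ++ Y)
  | [], X, Y => by simp [sred_refl]
  | d :: H', X, Y => by
    have ih := annihilate H' (X ++ [d]) (d :: Y)
    have hstep : Step (X ++ d :: d :: Y) (X ++ ([] : Word N) ++ Y) :=
      step_split X Y (by simp)
    refine sred_trans (v := X ++ d :: d :: Y) (by simpa using ih) (by simpa using step_sred hstep)

/-! ### The measure -/

def cnt (w : Word N) : ℕ → ℕ := fun k => (w.map lsize).count k

def RLtB (m : ℕ) (f g : ℕ → ℕ) : Prop :=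
  ∃ K, K < m ∧ f K < g K ∧ ∀ j, K < j → f j = g j

theorem rltb_wf : ∀ m, WellFounded (RLtB m)
  | 0 => ⟨fun f => Acc.intro f (fun _ ⟨_, hK, _⟩ => absurd hK (by omega))⟩
  | (m+1) => by
    have ihm := rltb_wf m
    have hlex : WellFounded (Prod.Lex (· < · : ℕ → ℕ → Prop) (RLtB m)) :=
      WellFounded.prod_lex Nat.lt_wfRel.wf ihm
    have key : ∀ f g, RLtB (m+1) f g → Prod.Lex (· < ·) (RLtB m) (f m, f) (g m, g) := by
      rintro f g ⟨K, hK, hlt, heq⟩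
      rcases Nat.lt_or_ge K m with h | h
      · have hfm : f m = g m := heq m (by omega)
        rw [hfm]
        exact Prod.Lex.right _ ⟨K, h, hlt, heq⟩
      · have hKm : K = m := by omega
        subst hKm
        exact Prod.Lex.left _ _ hlt
    have hw : WellFounded (InvImage (Prod.Lex (· < · : ℕ → ℕ → Prop) (RLtB m)) (fun f => (f m, f))) :=
      InvImage.wf _ hlex
    exact Subrelation.wf (fun {f g} h => (key f g h : InvImage (Prod.Lex (· < · : ℕ → ℕ → Prop) (RLtB m)) (fun f => (f m, f)) f g)) hw

theorem cnt_append (X Y : Word N) (k : ℕ) : cnt (X ++ Y) k = cnt X k + cnt Y k := by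
  simp [cnt]

theorem cnt_nil (k : ℕ) : cnt ([] : Word N) k = 0 := by simp [cnt]

theorem cnt_cons (c : Letter N) (X : Word N) (k : ℕ) :
    cnt (c :: X) k = (if lsize c = k then 1 else 0) + cnt X k := by
  by_cases h : lsize c = k <;> simp [cnt, h, List.count_cons] <;> omega

theorem rlt_trans {f g h : ℕ → ℕ} {m : ℕ} (h1 : RLtB m f g) (h2 : RLtB m g h) : RLtB m f h := by
  obtain ⟨K₁, hK₁, hlt₁, heq₁⟩ := h1
  obtain ⟨K₂, hK₂, hlt₂, heq₂⟩ := h2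
  rcases Nat.lt_trichotomy K₁ K₂ with hc | hc | hc
  · exact ⟨K₂, hK₂, by rw [heq₁ K₂ hc]; exact hlt₂, fun j hj => (heq₁ j (by omega)).trans (heq₂ j hj)⟩
  · subst hc
    exact ⟨K₁, hK₁, lt_trans hlt₁ hlt₂, fun j hj => (heq₁ j hj).trans (heq₂ j hj)⟩
  · exact ⟨K₁, hK₁, by rw [← heq₂ K₁ hc]; exact hlt₁, fun j hj => (heq₁ j hj).trans (heq₂ j (by omega))⟩

theorem cnt_small {m : Word N} {K : ℕ} (hm : ∀ c ∈ m, lsize c < K) :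
    ∀ j, K ≤ j → cnt m j = 0 := by
  intro j hj
  induction m with
  | nil => simp [cnt]
  | cons c m' ih =>
    rw [cnt_cons]
    have h1 := hm c (by simp)
    have h2 : ¬ (lsize c = j) := by omega
    rw [if_neg h2, ih (fun c hc => hm c (by simp [hc]))]

theorem rlt_of_delete (t : Letter N) {f g : ℕ → ℕ}
    (h : ∀ k, g k = f k + (if lsize t = k then 1 else 0)) : RLtB (N + 1) f g := by
  refine ⟨lsize t, by have := lsize_le t; omega, ?_, ?_⟩
  · rw [h (lsize t), if_pos rfl]; omega
  · intro j hj
    rw [h j, if_neg (by omega)]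
    omega

theorem rlt_of_split (s : Letter N) {R : Word N} (hR : ∀ c ∈ R, lsize c < lsize s)
    {f g : ℕ → ℕ} (h : ∀ k, f k + (if lsize s = k then 2 else 0) = g k + cnt R k) :
    RLtB (N + 1) f g := by
  refine ⟨lsize s, by have := lsize_le s; omega, ?_, ?_⟩
  · have := h (lsize s)
    rw [if_pos rfl, cnt_small hR (lsize s) (le_refl _)] at this
    omega
  · intro j hj
    have := h j
    rw [if_neg (by omega), cnt_small hR j (by omega)] at this
    omega

theorem step_cnt {u v : Word N} (h : Step u v) :
    (cnt v = cnt u) ∨ RLtB (N + 1) (cnt v) (cnt u) := by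
  rcases h with ⟨X, Y, p₁, p₂, R, (⟨hc, rfl⟩ | ⟨hs, rfl⟩ | ⟨hs, rfl⟩ | ⟨rfl, hl⟩), rfl, rfl⟩
  · left
    funext k
    simp only [cnt_append, cnt_cons, cnt_nil]
    omega
  · right
    refine rlt_of_delete p₂ (fun k => ?_)
    simp only [cnt_append, cnt_cons, cnt_nil]
    split_ifs <;> omega
  · right
    refine rlt_of_delete p₁ (fun k => ?_)
    simp only [cnt_append, cnt_cons, cnt_nil]
    split_ifs <;> omega
  · right
    refine rlt_of_split p₁ (fun c hc => lsize_lt_of_psub (hl c hc)) (fun k => ?_)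
    simp only [cnt_append, cnt_cons, cnt_nil]
    split_ifs <;> omega

theorem rlt_pair {a : Letter N} {m : Word N} (hm : m = [a] ∨ ∀ t ∈ m, PSub t a)
    (p B r : Word N) :
    RLtB (N + 1) (cnt (p ++ B ++ m ++ r)) (cnt (p ++ a :: (B ++ a :: r))) := by
  refine ⟨lsize a, by have := lsize_le a; omega, ?_, ?_⟩
  · rcases hm with rfl | hm
    · simp only [cnt_append, cnt_cons, cnt_nil]
      split_ifs <;> omega
    · have h0 : cnt m (lsize a) = 0 :=
        cnt_small (fun c hc => lsize_lt_of_psub (hm c hc)) _ (le_refl _)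
      simp only [cnt_append, cnt_cons, h0]
      split_ifs <;> omega
  · intro j hj
    rcases hm with rfl | hm
    · simp only [cnt_append, cnt_cons, cnt_nil]
      split_ifs <;> omega
    · have h0 : cnt m j = 0 :=
        cnt_small (fun c hc => lsize_lt_of_psub (hm c hc)) _ (by omega)
      simp only [cnt_append, cnt_cons, h0]
      split_ifs <;> omega

theorem rlt_del_letter (t : Letter N) (X Y : Word N) :
    RLtB (N + 1) (cnt (X ++ Y)) (cnt (X ++ t :: Y)) := by
  refine rlt_of_delete t (fun k => ?_)
  simp only [cnt_append, cnt_cons]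
  omega

/-! ### Positional decomposition -/

theorem seg2 : ∀ (α : Word N) {β X Y : Word N} {p₁ p₂ : Letter N},
    α ++ β = X ++ p₁ :: p₂ :: Y →
    (∃ α₂, α = X ++ p₁ :: p₂ :: α₂ ∧ Y = α₂ ++ β) ∨
    (α = X ++ [p₁] ∧ β = p₂ :: Y) ∨
    (∃ X₂, X = α ++ X₂ ∧ β = X₂ ++ p₁ :: p₂ :: Y)
  | [], β, X, Y, p₁, p₂, h => Or.inr (Or.inr ⟨X, by simp, by simpa using h⟩)
  | a :: α', β, X, Y, p₁, p₂, h => by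
    cases X with
    | nil =>
      simp only [List.nil_append, List.cons_append, List.cons.injEq] at h
      obtain ⟨rfl, h2⟩ := h
      cases α' with
      | nil => exact Or.inr (Or.inl ⟨by simp, by simpa using h2⟩)
      | cons b α'' =>
        simp only [List.cons_append, List.cons.injEq] at h2
        obtain ⟨rfl, h3⟩ := h2
        exact Or.inl ⟨α'', by simp, h3.symm⟩
    | cons x X' =>
      simp only [List.cons_append, List.cons.injEq] at h
      obtain ⟨rfl, h2⟩ := h
      rcases seg2 α' h2 with ⟨α₂, he, hy⟩ | ⟨he, hb⟩ | ⟨X₂, he, hb⟩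
      · exact Or.inl ⟨α₂, by simp [he], hy⟩
      · exact Or.inr (Or.inl ⟨by simp [he], hb⟩)
      · exact Or.inr (Or.inr ⟨X₂, by simp [he], hb⟩)

theorem seg5 {A Q B X Y : Word N} {t b p₁ p₂ : Letter N}
    (h : A ++ t :: (Q ++ b :: B) = X ++ p₁ :: p₂ :: Y) :
    (∃ A₁ A₂, A = A₁ ++ p₁ :: p₂ :: A₂ ∧ X = A₁ ∧ Y = A₂ ++ t :: (Q ++ b :: B)) ∨
    (∃ A₁, A = A₁ ++ [p₁] ∧ t = p₂ ∧ X = A₁ ∧ Y = Q ++ b :: B) ∨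
    (t = p₁ ∧ (∃ Q₂, Q = p₂ :: Q₂ ∧ X = A ∧ Y = Q₂ ++ b :: B)) ∨
    (t = p₁ ∧ Q = [] ∧ b = p₂ ∧ X = A ∧ Y = B) ∨
    (∃ Q₁ Q₂, Q = Q₁ ++ p₁ :: p₂ :: Q₂ ∧ X = A ++ t :: Q₁ ∧ Y = Q₂ ++ b :: B) ∨
    (∃ Q₁, Q = Q₁ ++ [p₁] ∧ b = p₂ ∧ X = A ++ t :: Q₁ ∧ Y = B) ∨
    (b = p₁ ∧ (∃ B₂, B = p₂ :: B₂ ∧ X = A ++ t :: Q ∧ Y = B₂)) ∨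
    (∃ B₁ B₂, B = B₁ ++ p₁ :: p₂ :: B₂ ∧ X = A ++ t :: (Q ++ b :: B₁) ∧ Y = B₂) := by
  rcases seg2 A h with ⟨A₂, hA, hY⟩ | ⟨hA, hβ⟩ | ⟨X₂, hX, hβ⟩
  · exact Or.inl ⟨X, A₂, hA, rfl, hY⟩
  · simp only [List.cons.injEq] at hβ
    exact Or.inr (Or.inl ⟨X, hA, hβ.1, rfl, hβ.2.symm⟩)
  · cases X₂ with
    | nil =>
      simp only [List.nil_append, List.cons.injEq] at hβ
      obtain ⟨rfl, hβ2⟩ := hβ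
      cases Q with
      | nil =>
        simp only [List.nil_append, List.cons.injEq] at hβ2
        exact Or.inr (Or.inr (Or.inr (Or.inl ⟨rfl, rfl, hβ2.1, by simpa using hX, hβ2.2.symm⟩)))
      | cons q Q₂ =>
        simp only [List.cons_append, List.cons.injEq] at hβ2
        obtain ⟨rfl, hβ3⟩ := hβ2
        exact Or.inr (Or.inr (Or.inl ⟨rfl, Q₂, rfl, by simpa using hX, hβ3.symm⟩))
    | cons z X₂' =>
      simp only [List.cons_append, List.cons.injEq] at hβ
      obtain ⟨rfl, hβ2⟩ := hβ
      rcases seg2 Q hβ2 with ⟨α₂, hQ, hY⟩ | ⟨hQ, hb⟩ | ⟨X₃, hX₃, hb⟩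
      · exact Or.inr (Or.inr (Or.inr (Or.inr (Or.inl ⟨X₂', α₂, hQ, hX, hY⟩))))
      · simp only [List.cons.injEq] at hb
        exact Or.inr (Or.inr (Or.inr (Or.inr (Or.inr (Or.inl ⟨X₂', hQ, hb.1, hX, hb.2.symm⟩)))))
      · cases X₃ with
        | nil =>
          simp only [List.nil_append, List.cons.injEq] at hb
          refine Or.inr (Or.inr (Or.inr (Or.inr (Or.inr (Or.inr (Or.inl ⟨hb.1, Y, hb.2, ?_, rfl⟩))))))
          rw [hX, hX₃]; simp
        | cons z' X₃' =>
          simp only [List.cons_append, List.cons.injEq] at hb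
          obtain ⟨rfl, hb2⟩ := hb
          refine Or.inr (Or.inr (Or.inr (Or.inr (Or.inr (Or.inr (Or.inr ⟨X₃', Y, hb2, ?_, rfl⟩))))))
          rw [hX, hX₃]

theorem sred_congr {u u' v v' : Word N} (h : SRed u v) (hu : u = u') (hv : v = v') :
    SRed u' v' := hu ▸ hv ▸ h

theorem comm_mono' {t c d : Letter N} (h1 : Sub c d) (h2 : Comm t d) : Comm t c :=
  comm_symm (comm_mono h1 (comm_symm h2))

theorem rule_letters {p₁ p₂ : Letter N} {R : Word N} (h : Rule p₁ p₂ R) :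
    ∀ c ∈ R, c = p₁ ∨ c = p₂ ∨ PSub c p₁ := by
  rcases h with ⟨_, rfl⟩ | ⟨_, rfl⟩ | ⟨_, rfl⟩ | ⟨rfl, hl⟩
  · intro c hc
    simp only [List.mem_cons, List.mem_singleton, List.not_mem_nil, or_false] at hc
    tauto
  · intro c hc; simp_all
  · intro c hc; simp_all
  · intro c hc
    exact Or.inr (Or.inr (hl c hc))

theorem rlt_split_word (X Y : Word N) (s : Letter N) {R : Word N}
    (hR : ∀ c ∈ R, PSub c s) : RLtB (N + 1) (cnt (X ++ R ++ Y)) (cnt (X ++ s :: s :: Y)) := by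
  refine rlt_of_split s (fun c hc => lsize_lt_of_psub (hR c hc)) (fun k => ?_)
  simp only [cnt_append, cnt_cons, cnt_nil]
  split_ifs <;> omega

theorem move_cancel {t b : Letter N} (hsub : Sub t b) {Q : Word N}
    (hQ : ∀ r ∈ Q, Comm t r) (X Y : Word N) :
    SRed (X ++ t :: (Q ++ b :: Y)) (X ++ (Q ++ b :: Y)) := by
  have h1 := move_right Q X (b :: Y) hQ
  have h2 : Step (X ++ Q ++ t :: b :: Y) (X ++ Q ++ b :: Y) := step_cancel₂ (X ++ Q) Y hsub
  refine sred_congr (sred_trans (sred_congr h1 (by simp) rfl) (step_sred h2)) rfl (by simp)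

/-! ### Reversal -/

theorem rule_reverse {p₁ p₂ : Letter N} {R : Word N} (h : Rule p₁ p₂ R) :
    Rule p₂ p₁ R.reverse := by
  rcases h with ⟨hc, rfl⟩ | ⟨hs, rfl⟩ | ⟨hs, rfl⟩ | ⟨rfl, hl⟩
  · exact Or.inl ⟨comm_symm hc, by simp⟩
  · exact Or.inr (Or.inr (Or.inl ⟨hs, by simp⟩))
  · exact Or.inr (Or.inl ⟨hs, by simp⟩)
  · exact Or.inr (Or.inr (Or.inr ⟨rfl, fun c hc => hl c (by simpa using hc)⟩))

theorem step_reverse {u v : Word N} (h : Step u v) : Step u.reverse v.reverse := by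
  rcases h with ⟨X, Y, p₁, p₂, R, hr, rfl, rfl⟩
  exact ⟨Y.reverse, X.reverse, p₂, p₁, R.reverse, rule_reverse hr, by simp, by simp⟩

theorem sred_reverse {u v : Word N} (h : SRed u v) : SRed u.reverse v.reverse := by
  rw [sred_iff] at *
  induction h with
  | refl => exact Relation.ReflTransGen.refl
  | tail _ hstep ih => exact ih.tail (step_reverse hstep)

theorem reduced_reverse {x : Word N} (h : Reduced x) : Reduced x.reverse := by
  rintro ⟨X, Y, Z, a, b, hx, hd⟩
  apply h
  refine ⟨Z.reverse, Y.reverse, X.reverse, b, a, ?_, ?_⟩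
  · have := congrArg List.reverse hx
    simpa using this
  · rcases hd with ⟨h1, h2⟩ | ⟨h1, h2⟩
    · exact Or.inr ⟨h1, fun r hr => h2 r (by simpa using hr)⟩
    · exact Or.inl ⟨h1, fun r hr => h2 r (by simpa using hr)⟩

/-! ### The Key deletion lemma: a properly absorbed letter can be deleted. -/

theorem key_lemma (H : ℕ → ℕ) : ∀ (T x : Word N), SRed T x → cnt T = H → Reduced x →
    ∀ (A Q B : Word N) (t b : Letter N), T = A ++ t :: (Q ++ b :: B) → PSub t b →
    (∀ r ∈ Q, Comm t r) → SRed (A ++ (Q ++ b :: B)) x := by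
  induction H using (rltb_wf (N + 1)).induction with
  | _ H IH_H =>
  intro T x hTx
  rw [sred_iff] at hTx
  induction hTx using Relation.ReflTransGen.head_induction_on with
  | refl =>
    intro hcnt hx A Q B t b hT hpsub hcommQ
    exact absurd ⟨A, Q, B, t, b, hT, Or.inl ⟨hpsub.1, hcommQ⟩⟩ hx
  | @head a c hstep htail ihn =>
    intro hcnt hx A Q B t b hT hpsub hcommQ
    have hZx : SRed c x := sred_iff.2 htail
    have IHZ : ∀ (A' Q' B' : Word N) (t' b' : Letter N), c = A' ++ t' :: (Q' ++ b' :: B') →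
        PSub t' b' → (∀ r ∈ Q', Comm t' r) → SRed (A' ++ (Q' ++ b' :: B')) x := by
      rcases step_cnt hstep with heq | hlt
      · intro A' Q' B' t' b' h1 h2 h3
        exact ihn (by rw [heq, hcnt]) hx A' Q' B' t' b' h1 h2 h3
      · intro A' Q' B' t' b' h1 h2 h3
        exact IH_H (cnt c) (by rw [← hcnt]; exact hlt) c x hZx rfl hx A' Q' B' t' b' h1 h2 h3
    have IHW : ∀ (T' : Word N), RLtB (N + 1) (cnt T') H → SRed T' x →
        ∀ (A' Q' B' : Word N) (t' b' : Letter N), T' = A' ++ t' :: (Q' ++ b' :: B') →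
        PSub t' b' → (∀ r ∈ Q', Comm t' r) → SRed (A' ++ (Q' ++ b' :: B')) x :=
      fun T' h1 h2 => IH_H (cnt T') h1 T' x h2 rfl hx
    obtain ⟨X, Y, p₁, p₂, R, hrule, ha, hc⟩ := hstep
    rw [hT] at ha
    rcases seg5 ha with
      ⟨A₁, A₂, hA, hX, hY⟩ | ⟨A₁, hA, ht, hX, hY⟩ | ⟨ht, Q₂, hQ, hX, hY⟩ |
      ⟨ht, hQ, hb, hX, hY⟩ | ⟨Q₁, Q₂, hQ, hX, hY⟩ | ⟨Q₁, hQ, hb, hX, hY⟩ |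
      ⟨hb, B₂, hB, hX, hY⟩ | ⟨B₁, B₂, hB, hX, hY⟩
    -- Case 1 : inside A
    · have hz : c = (A₁ ++ R ++ A₂) ++ t :: (Q ++ b :: B) := by rw [hc, hX, hY]; simp
      have h1 := IHZ (A₁ ++ R ++ A₂) Q B t b hz hpsub hcommQ
      have h2 : Step (A₁ ++ p₁ :: p₂ :: (A₂ ++ (Q ++ b :: B)))
          (A₁ ++ R ++ (A₂ ++ (Q ++ b :: B))) :=
        ⟨A₁, A₂ ++ (Q ++ b :: B), p₁, p₂, R, hrule, rfl, rfl⟩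
      exact sred_congr (sred_head h2 (sred_congr h1 (by simp) rfl)) (by simp [hA]) rfl
    -- Case 2 : boundary A | t  (t = p₂, A ends with p₁)
    · subst ht
      rcases hrule with ⟨hcm, hR⟩ | ⟨hs, hR⟩ | ⟨hs, hR⟩ | ⟨hpp, hR⟩
      · -- swap
        subst hR
        have hz : c = A₁ ++ t :: ((p₁ :: Q) ++ b :: B) := by rw [hc, hX, hY]; simp
        have h1 := IHZ A₁ (p₁ :: Q) B t b hz hpsub
          (fun r hr => by
            rcases List.mem_cons.1 hr with rfl | hr
            · exact comm_symm hcm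
            · exact hcommQ r hr)
        exact sred_congr h1 (by simp [hA]) rfl
      · -- cancel keeping p₁ (deleted letter is t) : c is already the goal word
        subst hR
        exact sred_congr hZx (by simp [hc, hX, hY, hA]) rfl
      · -- cancel keeping t (deleted p₁ ⊆ t)
        subst hR
        have hz : c = A₁ ++ t :: (Q ++ b :: B) := by rw [hc, hX, hY]; simp
        have h1 := IHZ A₁ Q B t b hz hpsub hcommQ
        have h2 : SRed ((A₁ ++ [p₁]) ++ (Q ++ b :: B)) (A₁ ++ (Q ++ b :: B)) := by
          have := move_cancel (t := p₁) (b := b) (sub_trans hs hpsub.1)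
            (fun r hr => comm_mono hs (hcommQ r hr)) A₁ B
          exact sred_congr this (by simp) rfl
        exact sred_congr (sred_trans h2 h1) (by rw [hA]) rfl
      · -- split : p₁ = t
        have hR' : ∀ d ∈ R, PSub d t := by rw [hpp] at hR; exact hR
        have hzx : SRed (A₁ ++ R ++ (Q ++ b :: B)) x :=
          sred_congr hZx (by simp [hc, hX, hY]) rfl
        have hRlt : RLtB (N + 1) (cnt (A₁ ++ R ++ (Q ++ b :: B))) H := by
          have heq : a = A₁ ++ t :: t :: (Q ++ b :: B) := by rw [hT, hA, hpp]; simp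
          rw [← hcnt, heq]
          exact rlt_split_word A₁ (Q ++ b :: B) t hR'
        have loop : ∀ (l : Word N), (∀ d ∈ l, PSub d t) →
            SRed (A₁ ++ l ++ (Q ++ b :: B)) x →
            RLtB (N + 1) (cnt (A₁ ++ l ++ (Q ++ b :: B))) H →
            SRed (A₁ ++ (Q ++ b :: B)) x := by
          intro l
          induction l using List.reverseRecOn with
          | nil => intro _ h _; exact sred_congr h (by simp) rfl
          | append_singleton l' d ihl =>
            intro hld hred hlt
            have h1 := IHW (A₁ ++ (l' ++ [d]) ++ (Q ++ b :: B)) hlt hred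
              (A₁ ++ l') Q B d b (by simp) (psub_of_psub_of_sub (hld d (by simp)) hpsub.1)
              (fun r hr => comm_mono (hld d (by simp)).1 (hcommQ r hr))
            have h2 : SRed (A₁ ++ l' ++ (Q ++ b :: B)) x := sred_congr h1 (by simp) rfl
            refine ihl (fun d' hd' => hld d' (by simp [hd'])) h2 ?_
            refine rlt_trans ?_ hlt
            have h5 := rlt_del_letter d (A₁ ++ l') (Q ++ b :: B)
            have e : (A₁ ++ l') ++ d :: (Q ++ b :: B) = A₁ ++ (l' ++ [d]) ++ (Q ++ b :: B) := by
              simp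
            rw [e] at h5
            exact h5
        have h3 := loop R hR' hzx hRlt
        refine sred_trans ?_ h3
        have := move_cancel (t := t) (b := b) hpsub.1 hcommQ A₁ B
        exact sred_congr this (by simp [hA, hpp]) rfl
    -- Case 3 : boundary t | head of Q  (t = p₁, Q = p₂ :: Q₂)
    · have hcm2 : Comm t p₂ := hcommQ p₂ (by rw [hQ]; simp)
      rcases hrule with ⟨hcm, hR⟩ | ⟨hs, hR⟩ | ⟨hs, hR⟩ | ⟨hpp, hR⟩
      · subst hR
        have hz : c = (A ++ [p₂]) ++ p₁ :: (Q₂ ++ b :: B) := by rw [hc, hX, hY]; simp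
        have h1 := IHZ (A ++ [p₂]) Q₂ B p₁ b hz (by rwa [← ht])
          (fun r hr => by rw [← ht]; exact hcommQ r (by rw [hQ]; simp [hr]))
        exact sred_congr h1 (by simp [hQ]) rfl
      · refine absurd hs (fun hs' => not_sub_comm hs' ?_)
        rw [← ht]; exact comm_symm hcm2
      · refine absurd (?_ : Sub t p₂) (fun hs' => not_sub_comm hs' hcm2)
        rw [ht]; exact hs
      · exact absurd (by rw [← (ht.trans hpp)] at hcm2; exact hcm2) (comm_irrefl t)
    -- Case 4 : t adjacent to b  (Q = [], t = p₁, b = p₂)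
    · rcases hrule with ⟨hcm, hR⟩ | ⟨hs, hR⟩ | ⟨hs, hR⟩ | ⟨hpp, hR⟩
      · refine absurd hpsub.1 (fun hs' => not_sub_comm hs' ?_)
        rw [ht, hb]; exact hcm
      · refine absurd (sub_antisymm hpsub.1 ?_) hpsub.2
        rw [ht, hb]; exact hs
      · subst hR
        exact sred_congr hZx (by rw [hc, hX, hY, hQ, hb]; simp) rfl
      · exact absurd (ht.trans (hpp.trans hb.symm)) hpsub.2
    -- Case 5 : inside Q
    · have hz : c = A ++ t :: ((Q₁ ++ R ++ Q₂) ++ b :: B) := by rw [hc, hX, hY]; simp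
      have hcomm' : ∀ r ∈ Q₁ ++ R ++ Q₂, Comm t r := by
        intro r hr
        rcases List.mem_append.1 hr with hr | hr
        · rcases List.mem_append.1 hr with hr | hr
          · exact hcommQ r (by rw [hQ]; simp [hr])
          · rcases rule_letters hrule r hr with rfl | rfl | hps
            · exact hcommQ r (by rw [hQ]; simp)
            · exact hcommQ r (by rw [hQ]; simp)
            · exact comm_mono' hps.1 (hcommQ p₁ (by rw [hQ]; simp))
        · exact hcommQ r (by rw [hQ]; simp [hr])
      have h1 := IHZ A (Q₁ ++ R ++ Q₂) B t b hz hpsub hcomm'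
      have h2 : Step ((A ++ Q₁) ++ p₁ :: p₂ :: (Q₂ ++ b :: B))
          ((A ++ Q₁) ++ R ++ (Q₂ ++ b :: B)) :=
        ⟨A ++ Q₁, Q₂ ++ b :: B, p₁, p₂, R, hrule, rfl, rfl⟩
      exact sred_congr (sred_head h2 (sred_congr h1 (by simp) rfl)) (by simp [hQ]) rfl
    -- Case 6 : boundary last of Q | b  (Q = Q₁ ++ [p₁], b = p₂)
    · have hcm1 : Comm t p₁ := hcommQ p₁ (by rw [hQ]; simp)
      have hcQ₁ : ∀ r ∈ Q₁, Comm t r := fun r hr => hcommQ r (by rw [hQ]; simp [hr])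
      rcases hrule with ⟨hcm, hR⟩ | ⟨hs, hR⟩ | ⟨hs, hR⟩ | ⟨hpp, hR⟩
      · subst hR
        have hz : c = A ++ t :: (Q₁ ++ b :: (p₁ :: B)) := by rw [hc, hX, hY, ← hb]; simp
        have h1 := IHZ A Q₁ (p₁ :: B) t b hz hpsub hcQ₁
        have h2 : Step ((A ++ Q₁) ++ p₁ :: b :: B) ((A ++ Q₁) ++ b :: p₁ :: B) :=
          step_swap (A ++ Q₁) B (by rw [hb]; exact hcm)
        exact sred_congr (sred_head h2 (sred_congr h1 (by simp) rfl)) (by simp [hQ]) rfl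
      · subst hR
        have hz : c = A ++ t :: (Q₁ ++ p₁ :: B) := by rw [hc, hX, hY]; simp
        have h1 := IHZ A Q₁ B t p₁ hz
          (psub_of_psub_of_sub hpsub (by rw [hb]; exact hs)) hcQ₁
        have h2 : Step ((A ++ Q₁) ++ p₁ :: b :: B) ((A ++ Q₁) ++ p₁ :: B) :=
          step_cancel₁ (A ++ Q₁) B (by rw [hb]; exact hs)
        exact sred_congr (sred_head h2 (sred_congr h1 (by simp) rfl)) (by simp [hQ]) rfl
      · subst hR
        have hz : c = A ++ t :: (Q₁ ++ b :: B) := by rw [hc, hX, hY, ← hb]; simp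
        have h1 := IHZ A Q₁ B t b hz hpsub hcQ₁
        have h2 : Step ((A ++ Q₁) ++ p₁ :: b :: B) ((A ++ Q₁) ++ b :: B) :=
          step_cancel₂ (A ++ Q₁) B (by rw [hb]; exact hs)
        exact sred_congr (sred_head h2 (sred_congr h1 (by simp) rfl)) (by simp [hQ]) rfl
      · refine absurd (?_ : Sub t p₁) (fun hs' => not_sub_comm hs' hcm1)
        rw [hpp, ← hb]; exact hpsub.1
    -- Case 7 : boundary b | head of B  (b = p₁, B = p₂ :: B₂)
    · rcases hrule with ⟨hcm, hR⟩ | ⟨hs, hR⟩ | ⟨hs, hR⟩ | ⟨hpp, hR⟩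
      · subst hR
        have hz : c = A ++ t :: ((Q ++ [p₂]) ++ b :: B₂) := by rw [hc, hX, hY, ← hb]; simp
        have h1 := IHZ A (Q ++ [p₂]) B₂ t b hz hpsub
          (fun r hr => by
            rcases List.mem_append.1 hr with hr | hr
            · exact hcommQ r hr
            · rcases List.mem_singleton.1 hr with rfl
              exact comm_mono hpsub.1 (by rw [hb]; exact hcm))
        have h2 : Step ((A ++ Q) ++ b :: p₂ :: B₂) ((A ++ Q) ++ p₂ :: b :: B₂) :=
          step_swap (A ++ Q) B₂ (by rw [hb]; exact hcm)
        exact sred_congr (sred_head h2 (sred_congr h1 (by simp) rfl)) (by simp [hB]) rfl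
      · subst hR
        have hz : c = A ++ t :: (Q ++ b :: B₂) := by rw [hc, hX, hY, ← hb]; simp
        have h1 := IHZ A Q B₂ t b hz hpsub hcommQ
        have h2 : Step ((A ++ Q) ++ b :: p₂ :: B₂) ((A ++ Q) ++ b :: B₂) :=
          step_cancel₁ (A ++ Q) B₂ (by rw [hb]; exact hs)
        exact sred_congr (sred_head h2 (sred_congr h1 (by simp) rfl)) (by simp [hB]) rfl
      · subst hR
        have hz : c = A ++ t :: (Q ++ p₂ :: B₂) := by rw [hc, hX, hY]; simp
        have h1 := IHZ A Q B₂ t p₂ hz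
          (psub_of_psub_of_sub hpsub (by rw [hb]; exact hs)) hcommQ
        have h2 : Step ((A ++ Q) ++ b :: p₂ :: B₂) ((A ++ Q) ++ p₂ :: B₂) :=
          step_cancel₂ (A ++ Q) B₂ (by rw [hb]; exact hs)
        exact sred_congr (sred_head h2 (sred_congr h1 (by simp) rfl)) (by simp [hB]) rfl
      · -- split of b with the next copy of b : anticipate t into the product
        have hprop : ∀ d ∈ t :: R, PSub d b := by
          intro d hd
          rcases List.mem_cons.1 hd with rfl | hd
          · exact hpsub
          · rw [hb]; exact hR d hd
        have h2 : Step ((A ++ Q) ++ b :: b :: B₂) ((A ++ Q) ++ (t :: R) ++ B₂) :=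
          step_split (A ++ Q) B₂ hprop
        have h3 : SRed ((A ++ Q) ++ (t :: R) ++ B₂) c := by
          have := move_left Q A (R ++ B₂) hcommQ
          refine sred_congr this (by simp) ?_
          rw [hc, hX, hY]; simp
        refine sred_congr (sred_head h2 (sred_trans h3 hZx)) ?_ rfl
        rw [hB, ← (hb.trans hpp)]; simp
    -- Case 8 : inside B
    · have hz : c = A ++ t :: (Q ++ b :: (B₁ ++ R ++ B₂)) := by rw [hc, hX, hY]; simp
      have h1 := IHZ A Q (B₁ ++ R ++ B₂) t b hz hpsub hcommQ
      have h2 : Step ((A ++ Q ++ b :: B₁) ++ p₁ :: p₂ :: B₂)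
          ((A ++ Q ++ b :: B₁) ++ R ++ B₂) :=
        ⟨A ++ Q ++ b :: B₁, B₂, p₁, p₂, R, hrule, rfl, rfl⟩
      exact sred_congr (sred_head h2 (sred_congr h1 (by simp) rfl)) (by simp [hB]) rfl

theorem mirror_key {A Q B x : Word N} {t b : Letter N}
    (hred : SRed (A ++ b :: (Q ++ t :: B)) x) (hx : Reduced x) (hpsub : PSub t b)
    (hcomm : ∀ r ∈ Q, Comm t r) : SRed (A ++ b :: (Q ++ B)) x := by
  have h1 := sred_reverse hred
  have h2 := key_lemma (cnt ((A ++ b :: (Q ++ t :: B)).reverse)) _ _ h1 rfl (reduced_reverse hx)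
    B.reverse Q.reverse A.reverse t b (by simp) hpsub (fun r hr => hcomm r (by simpa using hr))
  have h3 := sred_reverse h2
  exact sred_congr h3 (by simp) (by simp)

/-! ### The equal-pair lemma -/

theorem ep_lemma (H : ℕ → ℕ) : ∀ (T x : Word N), SRed T x → cnt T = H → Reduced x →
    ∀ (U Q W : Word N) (a : Letter N), T = U ++ a :: (Q ++ a :: W) →
    (∀ r ∈ Q, Comm a r) → ∀ (h₁ h₂ : Word N), (∀ c ∈ h₁, PSub c a) → (∀ c ∈ h₂, PSub c a) →
    ∃ m : Word N, (m = [a] ∨ ∀ c ∈ m, PSub c a) ∧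
      SRed (U ++ Q ++ h₁ ++ m ++ h₂ ++ W) x := by
  induction H using (rltb_wf (N + 1)).induction with
  | _ H IH_H =>
  intro T x hTx
  rw [sred_iff] at hTx
  induction hTx using Relation.ReflTransGen.head_induction_on with
  | refl =>
    intro hcnt hx U Q W a hT hcommQ h₁ h₂ hh₁ hh₂
    exact absurd ⟨U, Q, W, a, a, hT, Or.inl ⟨sub_refl a, hcommQ⟩⟩ hx
  | @head T' c hstep htail ihn =>
    intro hcnt hx U Q W a hT hcommQ h₁ h₂ hh₁ hh₂
    have hZx : SRed c x := sred_iff.2 htail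
    have IHZ : ∀ (U' Q' W' : Word N) (a' : Letter N), c = U' ++ a' :: (Q' ++ a' :: W') →
        (∀ r ∈ Q', Comm a' r) → ∀ (g₁ g₂ : Word N), (∀ d ∈ g₁, PSub d a') →
        (∀ d ∈ g₂, PSub d a') → ∃ m : Word N, (m = [a'] ∨ ∀ d ∈ m, PSub d a') ∧
        SRed (U' ++ Q' ++ g₁ ++ m ++ g₂ ++ W') x := by
      rcases step_cnt hstep with heq | hlt
      · exact fun U' Q' W' a' e1 e2 g₁ g₂ e3 e4 =>
          ihn (by rw [heq, hcnt]) hx U' Q' W' a' e1 e2 g₁ g₂ e3 e4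
      · exact fun U' Q' W' a' e1 e2 g₁ g₂ e3 e4 =>
          IH_H (cnt c) (by rw [← hcnt]; exact hlt) c x hZx rfl hx U' Q' W' a' e1 e2 g₁ g₂ e3 e4
    -- absorption helper : from SRed (U ++ Q ++ [a] ++ W') x conclude the goal with m = [a]
    have absorbM : ∀ (V V' : Word N), SRed (V ++ h₁ ++ a :: (h₂ ++ V')) (V ++ a :: V') := by
      intro V V'
      have s1 : SRed (V ++ h₁ ++ a :: (h₂ ++ V')) (V ++ a :: (h₂ ++ V')) :=
        absorb_left (fun d hd => (hh₁ d hd).1) V (h₂ ++ V')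
      have s2 : SRed (V ++ a :: h₂ ++ V') (V ++ a :: V') :=
        absorb_right (fun d hd => (hh₂ d hd).1) V V'
      exact sred_trans s1 (sred_congr s2 (by simp) rfl)
    obtain ⟨X, Y, p₁, p₂, R, hrule, ha, hc⟩ := hstep
    rw [hT] at ha
    rcases seg5 ha with
      ⟨U₁, U₂, hA, hX, hY⟩ | ⟨U₁, hA, ht, hX, hY⟩ | ⟨ht, Q₂, hQ, hX, hY⟩ |
      ⟨ht, hQ, hb, hX, hY⟩ | ⟨Q₁, Q₂, hQ, hX, hY⟩ | ⟨Q₁, hQ, hb, hX, hY⟩ |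
      ⟨hb, W₂, hB, hX, hY⟩ | ⟨W₁, W₂, hB, hX, hY⟩
    -- Case 1 : inside U
    · have hz : c = (U₁ ++ R ++ U₂) ++ a :: (Q ++ a :: W) := by rw [hc, hX, hY]; simp
      obtain ⟨m, hm, hred⟩ := IHZ (U₁ ++ R ++ U₂) Q W a hz hcommQ h₁ h₂ hh₁ hh₂
      refine ⟨m, hm, ?_⟩
      have h2 : Step (U₁ ++ p₁ :: p₂ :: (U₂ ++ (Q ++ h₁ ++ m ++ h₂ ++ W)))
          (U₁ ++ R ++ (U₂ ++ (Q ++ h₁ ++ m ++ h₂ ++ W))) :=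
        ⟨U₁, U₂ ++ (Q ++ h₁ ++ m ++ h₂ ++ W), p₁, p₂, R, hrule, rfl, rfl⟩
      exact sred_congr (sred_head h2 (sred_congr hred (by simp) rfl)) (by simp [hA]) rfl
    -- Case 2 : boundary U | left a  (a = p₂, U = U₁ ++ [p₁])
    · subst ht
      rcases hrule with ⟨hcm, hR⟩ | ⟨hs, hR⟩ | ⟨hs, hR⟩ | ⟨hpp, hR⟩
      · -- swap : p₁ joins Q
        subst hR
        have hz : c = U₁ ++ a :: ((p₁ :: Q) ++ a :: W) := by rw [hc, hX, hY]; simp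
        obtain ⟨m, hm, hred⟩ := IHZ U₁ (p₁ :: Q) W a hz
          (fun r hr => by
            rcases List.mem_cons.1 hr with rfl | hr
            · exact comm_symm hcm
            · exact hcommQ r hr) h₁ h₂ hh₁ hh₂
        exact ⟨m, hm, sred_congr hred (by simp [hA]) rfl⟩
      · -- left a cancels into p₁ ⊇ a
        subst hR
        refine ⟨[a], Or.inl rfl, ?_⟩
        have habs : SRed (U ++ Q ++ h₁ ++ [a] ++ h₂ ++ W) ((U ++ Q) ++ a :: W) :=
          sred_congr (absorbM (U ++ Q) W) (by simp) rfl
        refine sred_trans habs ?_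
        exact sred_congr hZx (by rw [hc, hX, hY]; simp [hA]) rfl
      · -- p₁ ⊆ a cancels into left a
        subst hR
        by_cases hpa : p₁ = a
        · -- an extra copy of a is absorbed : use m = [a] directly
          refine ⟨[a], Or.inl rfl, ?_⟩
          have habs : SRed (U ++ Q ++ h₁ ++ [a] ++ h₂ ++ W) ((U ++ Q) ++ a :: W) :=
            sred_congr (absorbM (U ++ Q) W) (by simp) rfl
          refine sred_trans habs ?_
          exact sred_congr hZx (by rw [hc, hX, hY]; simp [hA, hpa]) rfl
        · -- p₁ is a proper subletter : push it into h₁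
          have hz : c = U₁ ++ a :: (Q ++ a :: W) := by rw [hc, hX, hY]; simp
          obtain ⟨m, hm, hred⟩ := IHZ U₁ Q W a hz hcommQ (p₁ :: h₁) h₂
            (fun d hd => by
              rcases List.mem_cons.1 hd with rfl | hd
              · exact ⟨hs, hpa⟩
              · exact hh₁ d hd) hh₂
          refine ⟨m, hm, ?_⟩
          have hmv := move_right (c := p₁) Q U₁ (h₁ ++ m ++ h₂ ++ W)
            (fun r hr => comm_mono hs (hcommQ r hr))
          refine sred_trans (sred_congr hmv (by simp [hA]) rfl) ?_
          exact sred_congr hred (by simp) rfl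
      · -- split of p₁ = a with left a
        have hR' : ∀ d ∈ R, PSub d a := by rw [hpp] at hR; exact hR
        have hzx : SRed (U₁ ++ R ++ (Q ++ a :: W)) x :=
          sred_congr hZx (by simp [hc, hX, hY]) rfl
        have loop : ∀ (l : Word N), (∀ d ∈ l, PSub d a) →
            SRed (U₁ ++ l ++ (Q ++ a :: W)) x → SRed (U₁ ++ (Q ++ a :: W)) x := by
          intro l
          induction l using List.reverseRecOn with
          | nil => intro _ h; exact sred_congr h (by simp) rfl
          | append_singleton l' d ihl =>
            intro hld hred
            have h1 := key_lemma (cnt (U₁ ++ (l' ++ [d]) ++ (Q ++ a :: W))) _ x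
              (sred_congr hred (by simp) rfl) rfl hx (U₁ ++ l') Q W d a (by simp)
              (hld d (by simp))
              (fun r hr => comm_mono (hld d (by simp)).1 (hcommQ r hr))
            exact ihl (fun d' hd' => hld d' (by simp [hd'])) (sred_congr h1 (by simp) rfl)
        have F := loop R hR' hzx
        refine ⟨[a], Or.inl rfl, ?_⟩
        have habs : SRed (U ++ Q ++ h₁ ++ [a] ++ h₂ ++ W) ((U ++ Q) ++ a :: W) :=
          sred_congr (absorbM (U ++ Q) W) (by simp) rfl
        refine sred_trans habs ?_
        -- now : U ++ Q ++ a :: W  with U = U₁ ++ [a] ; move the U-a through Q and cancel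
        have hmv := move_right (c := a) Q U₁ (a :: W) hcommQ
        have hcan : Step ((U₁ ++ Q) ++ a :: a :: W) ((U₁ ++ Q) ++ a :: W) :=
          step_cancel₁ (U₁ ++ Q) W (sub_refl a)
        refine sred_trans (sred_congr hmv (by simp [hA, hpp]) rfl) ?_
        refine sred_head (show Step ((U₁ ++ Q) ++ a :: a :: W) ((U₁ ++ Q) ++ a :: W) from hcan) ?_
        exact sred_congr F (by simp) rfl
    -- Case 3 : boundary left a | head of Q  (a = p₁, Q = p₂ :: Q₂)
    · have hcm2 : Comm a p₂ := hcommQ p₂ (by rw [hQ]; simp)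
      rcases hrule with ⟨hcm, hR⟩ | ⟨hs, hR⟩ | ⟨hs, hR⟩ | ⟨hpp, hR⟩
      · subst hR
        have hz : c = (U ++ [p₂]) ++ a :: (Q₂ ++ a :: W) := by rw [hc, hX, hY, ← ht]; simp
        obtain ⟨m, hm, hred⟩ := IHZ (U ++ [p₂]) Q₂ W a hz
          (fun r hr => hcommQ r (by rw [hQ]; simp [hr])) h₁ h₂ hh₁ hh₂
        exact ⟨m, hm, sred_congr hred (by simp [hQ]) rfl⟩
      · refine absurd (?_ : Sub p₂ a) (fun hs' => not_sub_comm hs' (comm_symm hcm2))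
        rw [ht]; exact hs
      · refine absurd (?_ : Sub a p₂) (fun hs' => not_sub_comm hs' hcm2)
        rw [ht]; exact hs
      · exact absurd (by rw [← (ht.trans hpp)] at hcm2; exact hcm2) (comm_irrefl a)
    -- Case 4 : the two distinguished a's are adjacent (Q = [], a = p₁, a = p₂)
    · rcases hrule with ⟨hcm, hR⟩ | ⟨hs, hR⟩ | ⟨hs, hR⟩ | ⟨hpp, hR⟩
      · exact absurd (by rw [← ht, ← hb] at hcm; exact hcm) (comm_irrefl a)
      · subst hR
        refine ⟨[a], Or.inl rfl, ?_⟩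
        have habs : SRed (U ++ Q ++ h₁ ++ [a] ++ h₂ ++ W) ((U ++ Q) ++ a :: W) :=
          sred_congr (absorbM (U ++ Q) W) (by simp) rfl
        refine sred_trans habs ?_
        exact sred_congr hZx (by rw [hc, hX, hY, ← ht]; simp [hQ]) rfl
      · subst hR
        refine ⟨[a], Or.inl rfl, ?_⟩
        have habs : SRed (U ++ Q ++ h₁ ++ [a] ++ h₂ ++ W) ((U ++ Q) ++ a :: W) :=
          sred_congr (absorbM (U ++ Q) W) (by simp) rfl
        refine sred_trans habs ?_
        exact sred_congr hZx (by rw [hc, hX, hY, ← hb]; simp [hQ]) rfl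
      · -- split of the pair : anticipate the h's by duplicating them in the product
        refine ⟨h₁.reverse ++ R ++ h₂.reverse, Or.inr ?_, ?_⟩
        · intro d hd
          rcases List.mem_append.1 hd with hd | hd
          · rcases List.mem_append.1 hd with hd | hd
            · exact hh₁ d (by simpa using hd)
            · rw [ht]; exact hR d hd
          · exact hh₂ d (by simpa using hd)
        · have s1 : SRed (U ++ h₁ ++ h₁.reverse ++ (R ++ h₂.reverse ++ h₂ ++ W))
              (U ++ (R ++ h₂.reverse ++ h₂ ++ W)) := annihilate h₁ U _
          have s2 : SRed ((U ++ R) ++ h₂.reverse ++ h₂.reverse.reverse ++ W) ((U ++ R) ++ W) :=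
            annihilate h₂.reverse (U ++ R) W
          refine sred_trans (sred_congr s1 (by simp [hQ]) rfl) ?_
          refine sred_trans (sred_congr s2 (by simp) rfl) ?_
          exact sred_congr hZx (by simp [hc, hX, hY]) rfl
    -- Case 5 : inside Q
    · have hz : c = U ++ a :: ((Q₁ ++ R ++ Q₂) ++ a :: W) := by rw [hc, hX, hY]; simp
      have hcomm' : ∀ r ∈ Q₁ ++ R ++ Q₂, Comm a r := by
        intro r hr
        rcases List.mem_append.1 hr with hr | hr
        · rcases List.mem_append.1 hr with hr | hr
          · exact hcommQ r (by rw [hQ]; simp [hr])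
          · rcases rule_letters hrule r hr with rfl | rfl | hps
            · exact hcommQ r (by rw [hQ]; simp)
            · exact hcommQ r (by rw [hQ]; simp)
            · exact comm_mono' hps.1 (hcommQ p₁ (by rw [hQ]; simp))
        · exact hcommQ r (by rw [hQ]; simp [hr])
      obtain ⟨m, hm, hred⟩ := IHZ U (Q₁ ++ R ++ Q₂) W a hz hcomm' h₁ h₂ hh₁ hh₂
      refine ⟨m, hm, ?_⟩
      have h2 : Step ((U ++ Q₁) ++ p₁ :: p₂ :: (Q₂ ++ h₁ ++ m ++ h₂ ++ W))
          ((U ++ Q₁) ++ R ++ (Q₂ ++ h₁ ++ m ++ h₂ ++ W)) :=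
        ⟨U ++ Q₁, Q₂ ++ h₁ ++ m ++ h₂ ++ W, p₁, p₂, R, hrule, rfl, rfl⟩
      exact sred_congr (sred_head h2 (sred_congr hred (by simp) rfl)) (by simp [hQ]) rfl
    -- Case 6 : boundary last of Q | right a  (Q = Q₁ ++ [p₁], a = p₂)
    · have hcm1 : Comm a p₁ := hcommQ p₁ (by rw [hQ]; simp)
      rcases hrule with ⟨hcm, hR⟩ | ⟨hs, hR⟩ | ⟨hs, hR⟩ | ⟨hpp, hR⟩
      · subst hR
        have hz : c = U ++ a :: (Q₁ ++ a :: (p₁ :: W)) := by rw [hc, hX, hY, ← hb]; simp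
        obtain ⟨m, hm, hred⟩ := IHZ U Q₁ (p₁ :: W) a hz
          (fun r hr => hcommQ r (by rw [hQ]; simp [hr])) h₁ h₂ hh₁ hh₂
        refine ⟨m, hm, ?_⟩
        have hsubs : ∀ r ∈ h₁ ++ m ++ h₂, Sub r a := by
          intro r hr
          rcases List.mem_append.1 hr with hr | hr
          · rcases List.mem_append.1 hr with hr | hr
            · exact (hh₁ r hr).1
            · rcases hm with rfl | hm
              · rw [List.mem_singleton.1 hr]; exact sub_refl a
              · exact (hm r hr).1
          · exact (hh₂ r hr).1
        have hmv := move_right (c := p₁) (h₁ ++ m ++ h₂) (U ++ Q₁) W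
          (fun r hr => comm_symm (comm_mono (hsubs r hr) hcm1))
        refine sred_trans (sred_congr hmv (by simp [hQ]) rfl) ?_
        exact sred_congr hred (by simp) rfl
      · refine absurd (?_ : Sub a p₁) (fun hs' => not_sub_comm hs' hcm1)
        rw [hb]; exact hs
      · refine absurd (?_ : Sub p₁ a) (fun hs' => not_sub_comm hs' (comm_symm hcm1))
        rw [hb]; exact hs
      · refine absurd (?_ : Comm a a) (comm_irrefl a)
        rw [← (hpp.trans hb.symm)] at hcm1 ⊢
        exact hcm1
    -- Case 7 : boundary right a | head of W  (a = p₁, W = p₂ :: W₂)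
    · rcases hrule with ⟨hcm, hR⟩ | ⟨hs, hR⟩ | ⟨hs, hR⟩ | ⟨hpp, hR⟩
      · subst hR
        have hz : c = U ++ a :: ((Q ++ [p₂]) ++ a :: W₂) := by rw [hc, hX, hY, ← hb]; simp
        obtain ⟨m, hm, hred⟩ := IHZ U (Q ++ [p₂]) W₂ a hz
          (fun r hr => by
            rcases List.mem_append.1 hr with hr | hr
            · exact hcommQ r hr
            · rcases List.mem_singleton.1 hr with rfl
              rw [hb]; exact hcm) h₁ h₂ hh₁ hh₂
        refine ⟨m, hm, ?_⟩
        have hsubs : ∀ r ∈ h₁ ++ m ++ h₂, Sub r a := by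
          intro r hr
          rcases List.mem_append.1 hr with hr | hr
          · rcases List.mem_append.1 hr with hr | hr
            · exact (hh₁ r hr).1
            · rcases hm with rfl | hm
              · rw [List.mem_singleton.1 hr]; exact sub_refl a
              · exact (hm r hr).1
          · exact (hh₂ r hr).1
        have hcma : Comm a p₂ := by rw [hb]; exact hcm
        have hmv := move_left (c := p₂) (h₁ ++ m ++ h₂) (U ++ Q) W₂
          (fun r hr => comm_symm (comm_mono (hsubs r hr) hcma))
        refine sred_trans (sred_congr hmv (by simp [hB]) rfl) ?_
        exact sred_congr hred (by simp) rfl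
      · -- p₂ ⊆ right a cancels into it
        subst hR
        by_cases hpa : p₂ = a
        · refine ⟨[a], Or.inl rfl, ?_⟩
          have habs1 : SRed (U ++ Q ++ h₁ ++ [a] ++ h₂ ++ W)
              ((U ++ Q) ++ a :: (h₂ ++ W)) :=
            sred_congr (absorb_left (fun d hd => (hh₁ d hd).1) (U ++ Q) (h₂ ++ W))
              (by simp) rfl
          have habs2 : SRed ((U ++ Q ++ [a]) ++ h₂ ++ a :: W₂) ((U ++ Q ++ [a]) ++ a :: W₂) :=
            absorb_left (fun d hd => (hh₂ d hd).1) (U ++ Q ++ [a]) W₂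
          refine sred_trans habs1 ?_
          refine sred_trans (sred_congr habs2 (by simp [hB, hpa]) rfl) ?_
          have hmv := move_left (c := a) Q U (a :: W₂) hcommQ
          refine sred_trans (sred_congr hmv (by simp) rfl) ?_
          exact sred_congr hZx (by rw [hc, hX, hY, ← hb]; simp) rfl
        · have hz : c = U ++ a :: (Q ++ a :: W₂) := by rw [hc, hX, hY, ← hb]; simp
          obtain ⟨m, hm, hred⟩ := IHZ U Q W₂ a hz hcommQ h₁ (h₂ ++ [p₂]) hh₁
            (fun d hd => by
              rcases List.mem_append.1 hd with hd | hd
              · exact hh₂ d hd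
              · rcases List.mem_singleton.1 hd with rfl
                exact ⟨by rw [hb]; exact hs, hpa⟩)
          exact ⟨m, hm, sred_congr hred (by simp [hB]) rfl⟩
      · -- right a cancels into p₂ ⊇ a
        subst hR
        refine ⟨[a], Or.inl rfl, ?_⟩
        have habs : SRed (U ++ Q ++ h₁ ++ [a] ++ h₂ ++ W) ((U ++ Q) ++ a :: W) :=
          sred_congr (absorbM (U ++ Q) W) (by simp) rfl
        refine sred_trans habs ?_
        have hmv := move_left (c := a) Q U W hcommQ
        refine sred_trans (sred_congr hmv (by simp) rfl) ?_
        exact sred_congr hZx (by rw [hc, hX, hY, hB]; simp) rfl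
      · -- split of right a with the a heading W
        have hR' : ∀ d ∈ R, PSub d a := by rw [hb]; exact hR
        have hzx : SRed (U ++ a :: (Q ++ (R ++ W₂))) x :=
          sred_congr hZx (by rw [hc, hX, hY]; simp) rfl
        have loop : ∀ (l : Word N), (∀ d ∈ l, PSub d a) →
            SRed (U ++ a :: (Q ++ (l ++ W₂))) x → SRed (U ++ a :: (Q ++ W₂)) x := by
          intro l
          induction l with
          | nil => intro _ h; exact sred_congr h (by simp) rfl
          | cons d l' ihl =>
            intro hld hred
            have h1 := mirror_key (A := U) (b := a) (Q := Q) (t := d) (B := l' ++ W₂)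
              (sred_congr hred (by simp) rfl) hx (hld d (by simp))
              (fun r hr => comm_mono (hld d (by simp)).1 (hcommQ r hr))
            exact ihl (fun d' hd' => hld d' (by simp [hd'])) (sred_congr h1 (by simp) rfl)
        have F := loop R hR' hzx
        refine ⟨[a], Or.inl rfl, ?_⟩
        have habs1 : SRed (U ++ Q ++ h₁ ++ [a] ++ h₂ ++ W) ((U ++ Q) ++ a :: (h₂ ++ W)) :=
          sred_congr (absorb_left (fun d hd => (hh₁ d hd).1) (U ++ Q) (h₂ ++ W)) (by simp) rfl
        have habs2 : SRed ((U ++ Q ++ [a]) ++ h₂ ++ a :: W₂) ((U ++ Q ++ [a]) ++ a :: W₂) :=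
          absorb_left (fun d hd => (hh₂ d hd).1) (U ++ Q ++ [a]) W₂
        refine sred_trans habs1 ?_
        have hW2 : W = a :: W₂ := by rw [hB, ← (hb.trans hpp)]
        refine sred_trans (sred_congr habs2 (by simp [hW2]) rfl) ?_
        have hcan : Step ((U ++ Q) ++ a :: a :: W₂) ((U ++ Q) ++ a :: W₂) :=
          step_cancel₁ (U ++ Q) W₂ (sub_refl a)
        refine sred_trans (sred_congr (step_sred hcan) (by simp) rfl) ?_
        have hmv := move_left (c := a) Q U W₂ hcommQ
        refine sred_trans (sred_congr hmv (by simp) rfl) ?_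
        exact sred_congr F (by simp) rfl
    -- Case 8 : inside W
    · have hz : c = U ++ a :: (Q ++ a :: (W₁ ++ R ++ W₂)) := by rw [hc, hX, hY]; simp
      obtain ⟨m, hm, hred⟩ := IHZ U Q (W₁ ++ R ++ W₂) a hz hcommQ h₁ h₂ hh₁ hh₂
      refine ⟨m, hm, ?_⟩
      have h2 : Step ((U ++ Q ++ h₁ ++ m ++ h₂ ++ W₁) ++ p₁ :: p₂ :: W₂)
          ((U ++ Q ++ h₁ ++ m ++ h₂ ++ W₁) ++ R ++ W₂) :=
        ⟨U ++ Q ++ h₁ ++ m ++ h₂ ++ W₁, W₂, p₁, p₂, R, hrule, rfl, rfl⟩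
      exact sred_congr (sred_head h2 (sred_congr hred (by simp) rfl)) (by simp [hB]) rfl

theorem move_cancel' {t b : Letter N} (hsub : Sub t b) {Q : Word N}
    (hQ : ∀ r ∈ Q, Comm t r) (X Y : Word N) :
    SRed (X ++ b :: (Q ++ t :: Y)) (X ++ b :: (Q ++ Y)) := by
  have h1 := move_left (c := t) Q (X ++ [b]) Y hQ
  have h1' : SRed (X ++ b :: (Q ++ t :: Y)) (X ++ b :: t :: (Q ++ Y)) :=
    sred_congr h1 (by simp) (by simp)
  have h2 : Step (X ++ b :: t :: (Q ++ Y)) (X ++ b :: (Q ++ Y)) :=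
    step_cancel₁ X (Q ++ Y) hsub
  exact sred_trans h1' (step_sred h2)

theorem p2 (H : ℕ → ℕ) : ∀ (v : Word N), cnt v = H → ∀ (u w x : Word N),
    SRed (u ++ v ++ w) x → Reduced x →
    ∃ y, SRed v y ∧ Reduced y ∧ SRed (u ++ y ++ w) x := by
  induction H using (rltb_wf (N + 1)).induction with
  | _ H IHH =>
  intro v hv u w x hred hx
  by_cases hvred : Reduced v
  · exact ⟨v, sred_refl v, hvred, hred⟩
  · have hpat : ∃ (p B r : Word N) (α β : Letter N), v = p ++ α :: (B ++ β :: r) ∧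
        ((Sub α β ∧ ∀ c ∈ B, Comm α c) ∨ (Sub β α ∧ ∀ c ∈ B, Comm β c)) :=
      not_not.mp hvred
    obtain ⟨p, B, r, α, β, hveq, hd⟩ := hpat
    by_cases hab : α = β
    · -- an equal pair : use the equal-pair lemma
      subst hab
      have hcommB : ∀ c ∈ B, Comm α c := by
        rcases hd with ⟨_, h⟩ | ⟨_, h⟩ <;> exact h
      have hred' : SRed ((u ++ p) ++ α :: (B ++ α :: (r ++ w))) x :=
        sred_congr hred (by rw [hveq]; simp) rfl
      obtain ⟨m, hm, hm2⟩ := ep_lemma (cnt ((u ++ p) ++ α :: (B ++ α :: (r ++ w)))) _ x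
        hred' rfl hx (u ++ p) B (r ++ w) α rfl hcommB [] [] (by simp) (by simp)
      have hmv := move_right (c := α) B p (α :: r) hcommB
      have hstep : SRed (p ++ B ++ α :: α :: r) (p ++ B ++ m ++ r) := by
        rcases hm with rfl | hmp
        · exact sred_congr (step_sred (step_cancel₁ (p ++ B) r (sub_refl α)))
            (by simp) (by simp)
        · exact sred_congr (step_sred (step_split (p ++ B) r hmp)) (by simp) (by simp)
      have h1 : SRed v (p ++ B ++ m ++ r) := by
        refine sred_trans (sred_congr hmv ?_ (by simp)) hstep
        rw [hveq]; simp
      have h2 : RLtB (N + 1) (cnt (p ++ B ++ m ++ r)) H := by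
        rw [← hv]
        have := rlt_pair hm p B r
        rwa [← congrArg cnt hveq] at this
      have h3 : SRed (u ++ (p ++ B ++ m ++ r) ++ w) x := sred_congr hm2 (by simp) rfl
      obtain ⟨y, hy1, hy2, hy3⟩ := IHH (cnt (p ++ B ++ m ++ r)) h2 _ rfl u w x h3 hx
      exact ⟨y, sred_trans h1 hy1, hy2, hy3⟩
    · rcases hd with ⟨hsub, hcomm⟩ | ⟨hsub, hcomm⟩
      · -- α ⊊ β with α commuting over B : delete α by the key lemma
        have hkey := key_lemma (cnt ((u ++ p) ++ α :: (B ++ β :: (r ++ w)))) _ x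
          (sred_congr hred (by rw [hveq]; simp) rfl) rfl hx (u ++ p) B (r ++ w) α β rfl
          ⟨hsub, hab⟩ hcomm
        have h1 : SRed v (p ++ (B ++ β :: r)) := by
          refine sred_congr (move_cancel hsub hcomm p r) ?_ rfl
          rw [hveq]
        have h2 : RLtB (N + 1) (cnt (p ++ (B ++ β :: r))) H := by
          rw [← hv]
          have := rlt_del_letter α p (B ++ β :: r)
          rwa [← congrArg cnt hveq] at this
        have h3 : SRed (u ++ (p ++ (B ++ β :: r)) ++ w) x := sred_congr hkey (by simp) rfl
        obtain ⟨y, hy1, hy2, hy3⟩ := IHH (cnt (p ++ (B ++ β :: r))) h2 _ rfl u w x h3 hx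
        exact ⟨y, sred_trans h1 hy1, hy2, hy3⟩
      · -- β ⊊ α with β commuting over B : delete β by the mirror key lemma
        have hmk := mirror_key (A := u ++ p) (b := α) (Q := B) (t := β) (B := r ++ w)
          (sred_congr hred (by rw [hveq]; simp) rfl) hx ⟨hsub, fun h => hab h.symm⟩ hcomm
        have h1 : SRed v (p ++ α :: (B ++ r)) := by
          refine sred_congr (move_cancel' hsub hcomm p r) ?_ rfl
          rw [hveq]
        have h2 : RLtB (N + 1) (cnt (p ++ α :: (B ++ r))) H := by
          rw [← hv]
          have := rlt_del_letter β (p ++ α :: B) r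
          have e1 : cnt ((p ++ α :: B) ++ r) = cnt (p ++ α :: (B ++ r)) :=
            congrArg cnt (by simp)
          have e2 : cnt ((p ++ α :: B) ++ β :: r) = cnt (p ++ α :: (B ++ β :: r)) :=
            congrArg cnt (by simp)
          rw [e1, e2] at this
          rwa [← congrArg cnt hveq] at this
        have h3 : SRed (u ++ (p ++ α :: (B ++ r)) ++ w) x := sred_congr hmk (by simp) rfl
        obtain ⟨y, hy1, hy2, hy3⟩ := IHH (cnt (p ++ α :: (B ++ r))) h2 _ rfl u w x h3 hx
        exact ⟨y, sred_trans h1 hy1, hy2, hy3⟩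

end PSAux

open PS PSAux in
/-- Commutation Lemma: if `x` is a strong reduct of `u·v·w`, then there is a
strong reduct `y` of `v` with `u·y·w` strongly reducing to `x`. -/
theorem commutation_lemma {N : ℕ} (u v w x : Word N)
    (h : SRed (u ++ v ++ w) x) (hx : Reduced x) :
    ∃ y : Word N, SRed v y ∧ Reduced y ∧ SRed (u ++ y ++ w) x :=
  p2 (cnt v) v rfl u w x h hx
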